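/- (Asymptotics for the sign change, 1 < p < 2.) Fix x > 1 and 1 < p < 2. Let N(y) = u(y) + v(y) + w(y) be the numerator of η''(y) (after expanding over the common denominator) for the implicit level curve of m(x,y) = ((x+1)²+y²)^{p/2} − ((x−1)²+y²)^{p/2}. Then y^{8−3p} · N(y) → 8(p−1)(p−2)p² x < 0 as y → ∞. In particular N(y) < 0 for all sufficiently large y. -/

import Mathlib

open Real Filter

noncomputable section

/-- The term `u` in the numerator of `η''` (notation: `A = (x−1)²+y²`, `B = (x+1)²+y²`). -/
def uTerm (p x y : ℝ) : ℝ :=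
  ((p - 2) * y ^ 2 * ((x - 1) ^ 2 + y ^ 2) ^ ((p - 4) / 2)
      - (p - 2) * y ^ 2 * ((x + 1) ^ 2 + y ^ 2) ^ ((p - 4) / 2)
      + ((x - 1) ^ 2 + y ^ 2) ^ ((p - 2) / 2)
      - ((x + 1) ^ 2 + y ^ 2) ^ ((p - 2) / 2))
    * (p * (x - 1) * ((x - 1) ^ 2 + y ^ 2) ^ ((p - 2) / 2)
      - p * (x + 1) * ((x + 1) ^ 2 + y ^ 2) ^ ((p - 2) / 2)) ^ 2

/-- The term `v` in the numerator of `η''`. -/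
def vTerm (p x y : ℝ) : ℝ :=
  p ^ 2 * y ^ 2
    * (((x - 1) ^ 2 + y ^ 2) ^ ((p - 2) / 2)
      - ((x + 1) ^ 2 + y ^ 2) ^ ((p - 2) / 2)) ^ 2
    * ((p - 2) * (x - 1) ^ 2 * ((x - 1) ^ 2 + y ^ 2) ^ ((p - 4) / 2)
      - (p - 2) * (x + 1) ^ 2 * ((x + 1) ^ 2 + y ^ 2) ^ ((p - 4) / 2)
      + ((x - 1) ^ 2 + y ^ 2) ^ ((p - 2) / 2)
      - ((x + 1) ^ 2 + y ^ 2) ^ ((p - 2) / 2))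

/-- The term `w` in the numerator of `η''`. -/
def wTerm (p x y : ℝ) : ℝ :=
  2 * (p - 2) * p * y ^ 2
    * (-((x - 1) ^ 2 + y ^ 2) ^ ((p - 2) / 2)
      + ((x + 1) ^ 2 + y ^ 2) ^ ((p - 2) / 2))
    * ((1 - x) * ((x - 1) ^ 2 + y ^ 2) ^ ((p - 4) / 2)
      + (1 + x) * ((x + 1) ^ 2 + y ^ 2) ^ ((p - 4) / 2))
    * (-(p * (x - 1)) * ((x - 1) ^ 2 + y ^ 2) ^ ((p - 2) / 2)
      + p * (x + 1) * ((x + 1) ^ 2 + y ^ 2) ^ ((p - 2) / 2))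


lemma slopeLim' (q c : ℝ) :
    Tendsto (fun t : ℝ => ((1 + c * t) ^ q - 1) / t) (nhdsWithin 0 (Set.Ioi 0)) (nhds (q * c)) := by
  have h1 : HasDerivAt (fun t : ℝ => 1 + c * t) c 0 := by
    simpa using ((hasDerivAt_id (0:ℝ)).const_mul c).const_add (1:ℝ)
  have h2 : HasDerivAt (fun s : ℝ => s ^ q) (q * (1:ℝ) ^ (q - 1)) ((1:ℝ) + c * 0) := by
    simpa using (Real.hasDerivAt_rpow_const (x := (1:ℝ)) (p := q) (Or.inl one_ne_zero))
  have h3 : HasDerivAt (fun t : ℝ => (1 + c * t) ^ q) (q * c) 0 := by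
    have := h2.comp 0 h1
    simp only [Real.one_rpow, mul_one] at this
    exact this
  have h4 := hasDerivAt_iff_tendsto_slope.mp h3
  have h5 : Tendsto (slope (fun t : ℝ => (1 + c * t) ^ q) 0) (nhdsWithin 0 (Set.Ioi 0))
      (nhds (q * c)) :=
    h4.mono_left (nhdsWithin_mono _ (fun t ht => Set.mem_compl_singleton_iff.mpr (ne_of_gt ht)))
  refine h5.congr (fun t => ?_)
  simp [slope_def_field, div_eq_inv_mul]

lemma baseLim' (q c : ℝ) :
    Tendsto (fun t : ℝ => (1 + c * t) ^ q) (nhdsWithin 0 (Set.Ioi 0)) (nhds 1) := by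
  have hc : ContinuousAt (fun t : ℝ => (1 + c * t) ^ q) 0 := by
    apply ContinuousAt.rpow_const (by fun_prop)
    left; norm_num
  have h := hc.tendsto.mono_left (nhdsWithin_le_nhds (s := Set.Ioi (0:ℝ)))
  simpa using h

lemma splitRpow (y : ℝ) (hy : 0 < y) (c : ℝ) (hc : 0 ≤ c) (q : ℝ) :
    (c + y ^ 2) ^ q = y ^ (2 * q) * (1 + c * (y ^ 2)⁻¹) ^ q := by
  have h1 : c + y ^ 2 = y ^ 2 * (1 + c * (y ^ 2)⁻¹) := by field_simp; ring
  have h2 : (0:ℝ) ≤ 1 + c * (y ^ 2)⁻¹ := by positivity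
  rw [h1, Real.mul_rpow (by positivity) h2]
  congr 1
  rw [← Real.rpow_natCast y 2, ← Real.rpow_mul hy.le]
  norm_num

/-- Rescaled numerator as a function of `t = 1/y²`. -/
def PhiN (p x t : ℝ) : ℝ :=
  ((p - 2) * (((1 + (x-1)^2 * t) ^ ((p-4)/2) - (1 + (x+1)^2 * t) ^ ((p-4)/2)) / t)
      + ((1 + (x-1)^2 * t) ^ ((p-2)/2) - (1 + (x+1)^2 * t) ^ ((p-2)/2)) / t)
    * (p * (x-1) * (1 + (x-1)^2 * t) ^ ((p-2)/2)
        - p * (x+1) * (1 + (x+1)^2 * t) ^ ((p-2)/2)) ^ 2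
  + p ^ 2 * t * (((1 + (x-1)^2 * t) ^ ((p-2)/2) - (1 + (x+1)^2 * t) ^ ((p-2)/2)) / t) ^ 2
    * ((p - 2) * ((x-1)^2 * (1 + (x-1)^2 * t) ^ ((p-4)/2)
          - (x+1)^2 * (1 + (x+1)^2 * t) ^ ((p-4)/2))
      + ((1 + (x-1)^2 * t) ^ ((p-2)/2) - (1 + (x+1)^2 * t) ^ ((p-2)/2)) / t)
  + 2 * (p - 2) * p * (((1 + (x-1)^2 * t) ^ ((p-2)/2) - (1 + (x+1)^2 * t) ^ ((p-2)/2)) / t)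
    * ((1 - x) * (1 + (x-1)^2 * t) ^ ((p-4)/2) + (1 + x) * (1 + (x+1)^2 * t) ^ ((p-4)/2))
    * (p * (x-1) * (1 + (x-1)^2 * t) ^ ((p-2)/2) - p * (x+1) * (1 + (x+1)^2 * t) ^ ((p-2)/2))

lemma PhiN_tendsto (p x : ℝ) :
    Tendsto (PhiN p x) (nhdsWithin 0 (Set.Ioi 0))
      (nhds (8 * (p - 1) * (p - 2) * p ^ 2 * x)) := by
  have hD2 : Tendsto (fun t : ℝ =>
      ((1 + (x-1)^2 * t) ^ ((p-2)/2) - (1 + (x+1)^2 * t) ^ ((p-2)/2)) / t)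
      (nhdsWithin 0 (Set.Ioi 0)) (nhds ((p-2)/2 * (x-1)^2 - (p-2)/2 * (x+1)^2)) := by
    have := (slopeLim' ((p-2)/2) ((x-1)^2)).sub (slopeLim' ((p-2)/2) ((x+1)^2))
    refine this.congr fun t => ?_
    ring
  have hD4 : Tendsto (fun t : ℝ =>
      ((1 + (x-1)^2 * t) ^ ((p-4)/2) - (1 + (x+1)^2 * t) ^ ((p-4)/2)) / t)
      (nhdsWithin 0 (Set.Ioi 0)) (nhds ((p-4)/2 * (x-1)^2 - (p-4)/2 * (x+1)^2)) := by
    have := (slopeLim' ((p-4)/2) ((x-1)^2)).sub (slopeLim' ((p-4)/2) ((x+1)^2))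
    refine this.congr fun t => ?_
    ring
  have hE : Tendsto (fun t : ℝ =>
      p * (x-1) * (1 + (x-1)^2 * t) ^ ((p-2)/2) - p * (x+1) * (1 + (x+1)^2 * t) ^ ((p-2)/2))
      (nhdsWithin 0 (Set.Ioi 0)) (nhds (p * (x-1) * 1 - p * (x+1) * 1)) :=
    ((baseLim' ((p-2)/2) ((x-1)^2)).const_mul _).sub ((baseLim' ((p-2)/2) ((x+1)^2)).const_mul _)
  have hF : Tendsto (fun t : ℝ =>
      (x-1)^2 * (1 + (x-1)^2 * t) ^ ((p-4)/2) - (x+1)^2 * (1 + (x+1)^2 * t) ^ ((p-4)/2))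
      (nhdsWithin 0 (Set.Ioi 0)) (nhds ((x-1)^2 * 1 - (x+1)^2 * 1)) :=
    ((baseLim' ((p-4)/2) ((x-1)^2)).const_mul _).sub ((baseLim' ((p-4)/2) ((x+1)^2)).const_mul _)
  have hG : Tendsto (fun t : ℝ =>
      (1 - x) * (1 + (x-1)^2 * t) ^ ((p-4)/2) + (1 + x) * (1 + (x+1)^2 * t) ^ ((p-4)/2))
      (nhdsWithin 0 (Set.Ioi 0)) (nhds ((1 - x) * 1 + (1 + x) * 1)) :=
    ((baseLim' ((p-4)/2) ((x-1)^2)).const_mul _).add ((baseLim' ((p-4)/2) ((x+1)^2)).const_mul _)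
  have ht0 : Tendsto (fun t : ℝ => t) (nhdsWithin 0 (Set.Ioi 0)) (nhds 0) :=
    Filter.tendsto_id.mono_left nhdsWithin_le_nhds
  have hall := (((hD4.const_mul (p-2)).add hD2).mul (hE.pow 2)).add
    (((((tendsto_const_nhds (x := p^2)).mul ht0).mul (hD2.pow 2)).mul
      ((hF.const_mul (p-2)).add hD2)).add
     (((((hD2.const_mul (2 * (p-2) * p))).mul hG).mul hE)))
  have : Tendsto (PhiN p x) (nhdsWithin 0 (Set.Ioi 0)) (nhds
      (((p-2) * ((p-4)/2 * (x-1)^2 - (p-4)/2 * (x+1)^2)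
          + ((p-2)/2 * (x-1)^2 - (p-2)/2 * (x+1)^2)) * (p * (x-1) * 1 - p * (x+1) * 1) ^ 2
        + (p^2 * 0 * ((p-2)/2 * (x-1)^2 - (p-2)/2 * (x+1)^2) ^ 2
            * ((p-2) * ((x-1)^2 * 1 - (x+1)^2 * 1)
              + ((p-2)/2 * (x-1)^2 - (p-2)/2 * (x+1)^2))
          + 2 * (p-2) * p * ((p-2)/2 * (x-1)^2 - (p-2)/2 * (x+1)^2)
            * ((1 - x) * 1 + (1 + x) * 1) * (p * (x-1) * 1 - p * (x+1) * 1)))) := by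
    refine hall.congr fun t => ?_
    unfold PhiN
    ring
  convert this using 2
  ring


lemma keyEq (p x y : ℝ) (hy : 0 < y) :
    uTerm p x y + vTerm p x y + wTerm p x y
      = y ^ (2*((p-2)/2)) * y ^ (2*((p-2)/2)) * y ^ (2*((p-4)/2)) * PhiN p x ((y^2)⁻¹) := by
  have ha : (0:ℝ) ≤ (x-1)^2 := sq_nonneg _
  have hb : (0:ℝ) ≤ (x+1)^2 := sq_nonneg _
  have hrel : y ^ (2*((p-2)/2)) = y ^ (2*((p-4)/2)) * y ^ 2 := by
    rw [show (2:ℝ)*((p-2)/2) = 2*((p-4)/2) + 2 by ring, Real.rpow_add hy]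
    norm_num
  unfold uTerm vTerm wTerm PhiN
  rw [splitRpow y hy _ ha ((p-2)/2), splitRpow y hy _ hb ((p-2)/2),
      splitRpow y hy _ ha ((p-4)/2), splitRpow y hy _ hb ((p-4)/2)]
  set P2 := (1 + (x-1)^2 * (y^2)⁻¹) ^ ((p-2)/2) with hP2
  set Q2 := (1 + (x+1)^2 * (y^2)⁻¹) ^ ((p-2)/2) with hQ2
  set P4 := (1 + (x-1)^2 * (y^2)⁻¹) ^ ((p-4)/2) with hP4
  set Q4 := (1 + (x+1)^2 * (y^2)⁻¹) ^ ((p-4)/2) with hQ4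
  set r4 := y ^ (2*((p-4)/2)) with hr4
  rw [hrel]
  have hy2 : (y:ℝ)^2 ≠ 0 := by positivity
  field_simp
  ring


lemma hcompAux : Tendsto (fun y : ℝ => (y ^ 2)⁻¹) atTop (nhdsWithin 0 (Set.Ioi 0)) := by
  apply tendsto_nhdsWithin_of_tendsto_nhds_of_eventually_within
  · have h : Tendsto (fun y : ℝ => y ^ 2) atTop atTop := tendsto_pow_atTop (by norm_num)
    exact h.inv_tendsto_atTop
  · filter_upwards [eventually_gt_atTop (0:ℝ)] with y hy
    exact Set.mem_Ioi.mpr (inv_pos.mpr (by positivity))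

theorem stmt14 (p x : ℝ) (hp1 : 1 < p) (hp2 : p < 2) (hx : 1 < x) :
    Tendsto (fun y : ℝ => y ^ (8 - 3 * p) * (uTerm p x y + vTerm p x y + wTerm p x y))
      atTop (nhds (8 * (p - 1) * (p - 2) * p ^ 2 * x)) ∧
    8 * (p - 1) * (p - 2) * p ^ 2 * x < 0 ∧
    ∀ᶠ y in atTop, uTerm p x y + vTerm p x y + wTerm p x y < 0 := by
  have hEq : ∀ᶠ y in atTop, y ^ (8 - 3 * p) * (uTerm p x y + vTerm p x y + wTerm p x y)
      = PhiN p x ((y ^ 2)⁻¹) := by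
    filter_upwards [eventually_gt_atTop (0:ℝ)] with y hy
    have hone : y ^ (8 - 3*p) * y ^ (2*((p-2)/2)) * y ^ (2*((p-2)/2)) * y ^ (2*((p-4)/2))
        = 1 := by
      rw [← Real.rpow_add hy, ← Real.rpow_add hy, ← Real.rpow_add hy,
        show 8 - 3*p + 2*((p-2)/2) + 2*((p-2)/2) + 2*((p-4)/2) = (0:ℝ) by ring,
        Real.rpow_zero]
    calc y ^ (8 - 3 * p) * (uTerm p x y + vTerm p x y + wTerm p x y)
        = (y ^ (8 - 3*p) * y ^ (2*((p-2)/2)) * y ^ (2*((p-2)/2)) * y ^ (2*((p-4)/2)))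
            * PhiN p x ((y ^ 2)⁻¹) := by rw [keyEq p x y hy]; ring
      _ = PhiN p x ((y ^ 2)⁻¹) := by rw [hone, one_mul]
  have hmain : Tendsto (fun y : ℝ => y ^ (8 - 3 * p) * (uTerm p x y + vTerm p x y + wTerm p x y))
      atTop (nhds (8 * (p - 1) * (p - 2) * p ^ 2 * x)) := by
    have := (PhiN_tendsto p x).comp hcompAux
    exact this.congr' (by filter_upwards [hEq] with y h; simpa [Function.comp] using h.symm)
  have hneg : 8 * (p - 1) * (p - 2) * p ^ 2 * x < 0 := by
    have h1 : 0 < p - 1 := by linarith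
    have h2 : p - 2 < 0 := by linarith
    have h3 : 0 < p ^ 2 := by positivity
    have h4 : 0 < x := by linarith
    nlinarith [mul_pos (mul_pos h1 h3) h4]
  refine ⟨hmain, hneg, ?_⟩
  filter_upwards [hmain.eventually (Iio_mem_nhds hneg), eventually_gt_atTop (0:ℝ)]
    with y h1 h2
  have hpos : 0 < y ^ (8 - 3 * p) := Real.rpow_pos_of_pos h2 _
  nlinarith

end
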